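/- Let L be a semiprime Hom-Lie algebra and L ⊆ Q an extension of Hom-Lie algebras such that Q is an algebra of quotients of L. Then for every essential Hom-ideal I of L, Q is an algebra of quotients of I. -/
import Mathlib


/-- A Hom-Lie algebra structure on a vector space `Q` over a field `𝔽`, with the
twisting map `α` additionally satisfying condition (2.1):
`α [x,y] = [α x, y] = [x, α y]`. -/
structure HomLieAlgebra (𝔽 : Type*) [Field 𝔽] (Q : Type*) [AddCommGroup Q] [Module 𝔽 Q] where
  bracket : Q →ₗ[𝔽] Q →ₗ[𝔽] Q
  alpha : Q →ₗ[𝔽] Q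
  skew : ∀ x y, bracket x y = - bracket y x
  jacobi : ∀ x y z, bracket (alpha x) (bracket y z) + bracket (alpha y) (bracket z x)
      + bracket (alpha z) (bracket x y) = 0
  comm₁ : ∀ x y, alpha (bracket x y) = bracket (alpha x) y
  comm₂ : ∀ x y, alpha (bracket x y) = bracket x (alpha y)

namespace HomLieAlgebra

variable {𝔽 : Type*} [Field 𝔽] {Q : Type*} [AddCommGroup Q] [Module 𝔽 Q]
variable (H : HomLieAlgebra 𝔽 Q)

/-- `S` is a Hom-subalgebra: a subspace closed under `α` and the bracket. -/
def IsSubalgebra (S : Submodule 𝔽 Q) : Prop :=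
  (∀ x ∈ S, H.alpha x ∈ S) ∧ ∀ x ∈ S, ∀ y ∈ S, H.bracket x y ∈ S

/-- `I` is a Hom-ideal of the Hom-subalgebra `L`:
a subspace `I ⊆ L` with `α(I) ⊆ I` and `[I, L] ⊆ I`. -/
def IsIdealOf (L I : Submodule 𝔽 Q) : Prop :=
  I ≤ L ∧ (∀ x ∈ I, H.alpha x ∈ I) ∧ ∀ x ∈ I, ∀ y ∈ L, H.bracket x y ∈ I

/-- The α-annihilator of the set `S` inside the subalgebra `M`:
`Ann_M(S) = {x ∈ M | [x, α(y)] = 0 for all y ∈ S}`. -/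
def annIn (M : Submodule 𝔽 Q) (S : Set Q) : Set Q :=
  {x | x ∈ M ∧ ∀ y ∈ S, H.bracket x (H.alpha y) = 0}

/-- `I` is an essential Hom-ideal of `L`: it hits every nonzero Hom-ideal of `L`. -/
def IsEssentialIdealOf (L I : Submodule 𝔽 Q) : Prop :=
  H.IsIdealOf L I ∧ ∀ J : Submodule 𝔽 Q, H.IsIdealOf L J → J ≠ ⊥ → I ⊓ J ≠ ⊥

/-- The Hom-Lie algebra `L` is semiprime: `[I, α(I)] ≠ {0}` for every nonzero
Hom-ideal `I` of `L`. -/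
def IsSemiprimeOn (L : Submodule 𝔽 Q) : Prop :=
  ∀ I : Submodule 𝔽 Q, H.IsIdealOf L I → I ≠ ⊥ →
    ∃ x ∈ I, ∃ y ∈ I, H.bracket x (H.alpha y) ≠ 0

/-- The Hom-Lie algebra `L` is prime: `[I, α(J)] ≠ {0}` for all nonzero
Hom-ideals `I`, `J` of `L`. -/
def IsPrimeOn (L : Submodule 𝔽 Q) : Prop :=
  ∀ I J : Submodule 𝔽 Q, H.IsIdealOf L I → I ≠ ⊥ → H.IsIdealOf L J → J ≠ ⊥ →
    ∃ x ∈ I, ∃ y ∈ J, H.bracket x (H.alpha y) ≠ 0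

/-- The iterated brackets `[[…[[q,x₁],x₂],…],xₙ]` with `xᵢ ∈ L` (including `q` itself). -/
inductive IsWord (L : Submodule 𝔽 Q) (q : Q) : Q → Prop
  | base : IsWord L q q
  | step {p : Q} (x : Q) : IsWord L q p → x ∈ L → IsWord L q (H.bracket p x)

/-- `_L(q)`: the linear span in `Q` of `q` together with all the iterated brackets
`[[…[[q,x₁],x₂],…],xₙ]` with `xᵢ ∈ L`. -/
def wordSpan (L : Submodule 𝔽 Q) (q : Q) : Submodule 𝔽 Q :=
  Submodule.span 𝔽 {p | H.IsWord L q p}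

/-- `(L : q) = {x ∈ L | [x, α(_L(q))] ⊆ L}`, as a subspace of `Q`. -/
def quotIdeal (L : Submodule 𝔽 Q) (q : Q) : Submodule 𝔽 Q where
  carrier := {x | x ∈ L ∧ ∀ p ∈ H.wordSpan L q, H.bracket x (H.alpha p) ∈ L}
  add_mem' := by
    rintro a b ⟨haL, ha⟩ ⟨hbL, hb⟩
    refine ⟨L.add_mem haL hbL, fun p hp => ?_⟩
    rw [map_add, LinearMap.add_apply]
    exact L.add_mem (ha p hp) (hb p hp)
  zero_mem' := ⟨L.zero_mem, fun p _ => by simp⟩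
  smul_mem' := by
    rintro c a ⟨haL, ha⟩
    refine ⟨L.smul_mem c haL, fun p hp => ?_⟩
    rw [map_smul, LinearMap.smul_apply]
    exact L.smul_mem c (ha p hp)

/-- `Q` is an algebra of quotients of its Hom-subalgebra `L`: for all `p, q ∈ Q` with
`p ≠ 0` there is `x ∈ (L : q)` with `[x, α(p)] ≠ 0`. -/
def IsAlgebraOfQuotients (L : Submodule 𝔽 Q) : Prop :=
  ∀ p q : Q, p ≠ 0 → ∃ x ∈ H.quotIdeal L q, H.bracket x (H.alpha p) ≠ 0

/-- `Q` is a weak algebra of quotients of its Hom-subalgebra `L`: for every nonzero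
`q ∈ Q` there is `x ∈ L` with `0 ≠ [x, α(q)] ∈ L`. -/
def IsWeakAlgebraOfQuotients (L : Submodule 𝔽 Q) : Prop :=
  ∀ q : Q, q ≠ 0 → ∃ x ∈ L, H.bracket x (H.alpha q) ≠ 0 ∧ H.bracket x (H.alpha q) ∈ L

/-- `Q` is ideally absorbed into `L`: for every nonzero `q ∈ Q` there is a Hom-ideal `I`
of `L` with `Ann_L(I) = {0}` and `{0} ≠ [I, α(q)] ⊆ L`. -/
def IsIdeallyAbsorbed (L : Submodule 𝔽 Q) : Prop :=
  ∀ q : Q, q ≠ 0 → ∃ I : Submodule 𝔽 Q, H.IsIdealOf L I ∧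
    H.annIn L (I : Set Q) = {0} ∧
    (∃ y ∈ I, H.bracket y (H.alpha q) ≠ 0) ∧
    ∀ y ∈ I, H.bracket y (H.alpha q) ∈ (L : Set Q)

/-- The inner derivation `ad_q : p ↦ [α(q), p]`. -/
def ad (q : Q) : Module.End 𝔽 Q := H.bracket (H.alpha q)

end HomLieAlgebra

namespace HomLieAlgebra

variable {𝔽 : Type*} [Field 𝔽] {Q : Type*} [AddCommGroup Q] [Module 𝔽 Q]
variable (H : HomLieAlgebra 𝔽 Q)

private lemma auxSlide (x y : Q) : H.bracket (H.alpha x) y = H.bracket x (H.alpha y) :=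
  (H.comm₁ x y).symm.trans (H.comm₂ x y)

/-- The key bracket identity: `[[x,y], α w] = [x,[y,α w]] - [y,[x,α w]]`. -/
private lemma auxKey (x y w : Q) :
    H.bracket (H.bracket x y) (H.alpha w)
      = H.bracket x (H.bracket y (H.alpha w)) - H.bracket y (H.bracket x (H.alpha w)) := by
  have j := H.jacobi x y w
  have e1 : H.bracket (H.alpha x) (H.bracket y w)
      = H.bracket x (H.bracket y (H.alpha w)) := by
    rw [auxSlide, H.comm₂ y w]
  have e2 : H.bracket (H.alpha y) (H.bracket w x)
      = - H.bracket y (H.bracket x (H.alpha w)) := by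
    rw [auxSlide, H.skew w x, map_neg, map_neg, H.comm₂ x w]
  have e3 := eq_neg_of_add_eq_zero_left j
  rw [H.skew (H.bracket x y) (H.alpha w), ← e3, e1, e2, ← sub_eq_add_neg]

/-- Plain Leibniz rule, valid when `α` has trivial kernel. -/
private lemma auxLeibniz (hker : ∀ v : Q, H.alpha v = 0 → v = 0) (x y a : Q) :
    H.bracket (H.bracket x y) a
      = H.bracket x (H.bracket y a) - H.bracket y (H.bracket x a) := by
  have h : H.alpha (H.bracket (H.bracket x y) a
      - (H.bracket x (H.bracket y a) - H.bracket y (H.bracket x a))) = 0 := by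
    rw [map_sub, map_sub, H.comm₂ (H.bracket x y) a, auxKey,
        H.comm₂ x (H.bracket y a), H.comm₂ y (H.bracket x a), H.comm₂ y a, H.comm₂ x a,
        sub_self]
  exact sub_eq_zero.mp (hker _ h)

private lemma auxIsWordMono {I L : Submodule 𝔽 Q} (hIL : I ≤ L) {q w : Q}
    (hw : H.IsWord I q w) : H.IsWord L q w := by
  induction hw with
  | base => exact IsWord.base
  | step x hp hx ih => exact IsWord.step x ih (hIL hx)

private lemma auxMemQuot {L : Submodule 𝔽 Q} {q x : Q} :
    x ∈ H.quotIdeal L q ↔ x ∈ L ∧ ∀ r ∈ H.wordSpan L q, H.bracket x (H.alpha r) ∈ L :=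
  Iff.rfl

private lemma auxInfIdeal {L A B : Submodule 𝔽 Q} (hA : H.IsIdealOf L A)
    (hB : H.IsIdealOf L B) : H.IsIdealOf L (A ⊓ B) := by
  refine ⟨fun x hx => hA.1 (Submodule.mem_inf.mp hx).1, fun x hx => ?_, fun x hx y hy => ?_⟩
  · obtain ⟨h1, h2⟩ := Submodule.mem_inf.mp hx
    exact Submodule.mem_inf.mpr ⟨hA.2.1 x h1, hB.2.1 x h2⟩
  · obtain ⟨h1, h2⟩ := Submodule.mem_inf.mp hx
    exact Submodule.mem_inf.mpr ⟨hA.2.2 x h1 y hy, hB.2.2 x h2 y hy⟩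

/-- `(L : q)` is a Hom-ideal of `L`. -/
private lemma auxQuotIdealIsIdeal {L : Submodule 𝔽 Q} (hL : H.IsSubalgebra L) (q : Q) :
    H.IsIdealOf L (H.quotIdeal L q) := by
  refine ⟨fun x hx => hx.1, fun x hx => ⟨hL.1 x hx.1, fun r hr => ?_⟩,
    fun x hx a ha => ⟨hL.2 x hx.1 a ha, fun r hr => ?_⟩⟩
  · rw [← H.comm₁ x (H.alpha r)]
    exact hL.1 _ (hx.2 r hr)
  · induction hr using Submodule.span_induction with
    | mem w hw =>
      have h2 : H.bracket a (H.bracket x (H.alpha w)) ∈ L :=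
        hL.2 a ha _ (hx.2 w (Submodule.subset_span hw))
      have h1 : H.bracket x (H.bracket a (H.alpha w)) ∈ L := by
        have e : H.bracket a (H.alpha w) = - H.alpha (H.bracket w a) := by
          rw [H.skew a (H.alpha w), H.comm₁ w a]
        rw [e, map_neg]
        exact L.neg_mem (hx.2 _ (Submodule.subset_span (IsWord.step a hw ha)))
      rw [auxKey]
      exact L.sub_mem h1 h2
    | zero => simp
    | add r₁ r₂ h₁ h₂ ih₁ ih₂ =>
      rw [map_add, map_add]
      exact L.add_mem ih₁ ih₂
    | smul c r h ih =>
      rw [map_smul, map_smul]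
      exact L.smul_mem c ih

/-- `(L : q)` is an essential ideal of `L` when `Q` is an algebra of quotients of `L`. -/
private lemma auxQuotIdealEss {L : Submodule 𝔽 Q} (hL : H.IsSubalgebra L)
    (hq : H.IsAlgebraOfQuotients L) (r : Q) :
    ∀ J, H.IsIdealOf L J → J ≠ ⊥ → H.quotIdeal L r ⊓ J ≠ ⊥ := by
  intro J hJ hJ0
  obtain ⟨j, hj, hj0⟩ := (Submodule.ne_bot_iff J).mp hJ0
  obtain ⟨x, hx, hxj⟩ := hq j r hj0
  have hqidl := H.auxQuotIdealIsIdeal hL r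
  have key : H.bracket j (H.alpha x) = - H.bracket x (H.alpha j) := by
    rw [H.skew j (H.alpha x), auxSlide]
  refine (Submodule.ne_bot_iff _).mpr ⟨H.bracket j (H.alpha x),
    Submodule.mem_inf.mpr ⟨?_, ?_⟩, by rw [key]; exact neg_ne_zero.mpr hxj⟩
  · rw [key]
    exact (H.quotIdeal L r).neg_mem
      (hqidl.2.2 x hx (H.alpha j) (hL.1 j (hJ.1 hj)))
  · exact hJ.2.2 j hj (H.alpha x) (hL.1 x hx.1)

/-- The annihilator of `N` in `L` (as a submodule). -/
private def auxAnn (L N : Submodule 𝔽 Q) : Submodule 𝔽 Q where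
  carrier := {z | z ∈ L ∧ ∀ n ∈ N, H.bracket z (H.alpha n) = 0}
  add_mem' := by
    rintro a b ⟨haL, ha⟩ ⟨hbL, hb⟩
    refine ⟨L.add_mem haL hbL, fun n hn => ?_⟩
    rw [map_add, LinearMap.add_apply, ha n hn, hb n hn, add_zero]
  zero_mem' := ⟨L.zero_mem, fun n _ => by rw [map_zero, LinearMap.zero_apply]⟩
  smul_mem' := by
    rintro c a ⟨haL, ha⟩
    refine ⟨L.smul_mem c haL, fun n hn => ?_⟩
    rw [map_smul, LinearMap.smul_apply, ha n hn, smul_zero]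

private lemma auxAnnIsIdeal {L N : Submodule 𝔽 Q} (hL : H.IsSubalgebra L)
    (hN : H.IsIdealOf L N) : H.IsIdealOf L (H.auxAnn L N) := by
  refine ⟨fun z hz => hz.1, fun z hz => ⟨hL.1 z hz.1, fun n hn => ?_⟩,
    fun z hz a ha => ⟨hL.2 z hz.1 a ha, fun n hn => ?_⟩⟩
  · rw [← H.comm₁ z (H.alpha n), hz.2 n hn, map_zero]
  · have h2 : H.bracket a (H.bracket z (H.alpha n)) = 0 := by
      rw [hz.2 n hn, map_zero]
    have h1 : H.bracket z (H.bracket a (H.alpha n)) = 0 := by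
      have e : H.bracket a (H.alpha n) = - H.alpha (H.bracket n a) := by
        rw [H.skew a (H.alpha n), H.comm₁ n a]
      rw [e, map_neg, hz.2 _ (hN.2.2 n hn a ha), neg_zero]
    rw [auxKey, h1, h2, sub_zero]

private lemma auxAnnEqBot {L N : Submodule 𝔽 Q} (hL : H.IsSubalgebra L)
    (hsp : H.IsSemiprimeOn L) (hN : H.IsIdealOf L N)
    (hNess : ∀ J, H.IsIdealOf L J → J ≠ ⊥ → N ⊓ J ≠ ⊥) : H.auxAnn L N = ⊥ := by
  by_contra h
  obtain ⟨u, hu, v, hv, huv⟩ := hsp _ (H.auxInfIdeal hN (H.auxAnnIsIdeal hL hN))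
    (hNess _ (H.auxAnnIsIdeal hL hN) h)
  exact huv ((Submodule.mem_inf.mp hu).2.2 v (Submodule.mem_inf.mp hv).1)

/-- The span of brackets of an ideal `K` is an ideal of `L`. -/
private lemma auxNIsIdeal {L K : Submodule 𝔽 Q} (hker : ∀ v : Q, H.alpha v = 0 → v = 0)
    (hL : H.IsSubalgebra L) (hK : H.IsIdealOf L K) :
    H.IsIdealOf L (Submodule.span 𝔽 {z | ∃ x ∈ K, ∃ y ∈ K, z = H.bracket x y}) := by
  have hgen : {z | ∃ x ∈ K, ∃ y ∈ K, z = H.bracket x y} ⊆ (L : Set Q) := by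
    rintro z ⟨x, hx, y, hy, rfl⟩
    exact hL.2 x (hK.1 hx) y (hK.1 hy)
  refine ⟨Submodule.span_le.mpr hgen, fun n hn => ?_, fun n hn a ha => ?_⟩
  · induction hn using Submodule.span_induction with
    | mem z hz =>
      obtain ⟨x, hx, y, hy, rfl⟩ := hz
      exact Submodule.subset_span ⟨H.alpha x, hK.2.1 x hx, y, hy, H.comm₁ x y⟩
    | zero => simp
    | add u v hu hv ihu ihv =>
      rw [map_add]; exact Submodule.add_mem _ ihu ihv
    | smul c u hu ihu =>
      rw [map_smul]; exact Submodule.smul_mem _ c ihu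
  · induction hn using Submodule.span_induction with
    | mem z hz =>
      obtain ⟨x, hx, y, hy, rfl⟩ := hz
      rw [auxLeibniz H hker x y a]
      exact Submodule.sub_mem _
        (Submodule.subset_span ⟨x, hx, H.bracket y a, hK.2.2 y hy a ha, rfl⟩)
        (Submodule.subset_span ⟨y, hy, H.bracket x a, hK.2.2 x hx a ha, rfl⟩)
    | zero =>
      have : H.bracket (0 : Q) a = 0 := by rw [map_zero, LinearMap.zero_apply]
      rw [this]; exact Submodule.zero_mem _
    | add u v hu hv ihu ihv =>
      rw [map_add, LinearMap.add_apply]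
      exact Submodule.add_mem _ ihu ihv
    | smul c u hu ihu =>
      rw [map_smul, LinearMap.smul_apply]
      exact Submodule.smul_mem _ c ihu

/-- The crucial absorption: the span of brackets of `K := I ⊓ (L:q)` lies in `(I : q)`. -/
private lemma auxNLeQuot {L I : Submodule 𝔽 Q} (hI : H.IsIdealOf L I) (q : Q)
    {K : Submodule 𝔽 Q} (hKI : K ≤ I) (hKq : K ≤ H.quotIdeal L q) :
    Submodule.span 𝔽 {z | ∃ x ∈ K, ∃ y ∈ K, z = H.bracket x y} ≤ H.quotIdeal I q := by
  refine Submodule.span_le.mpr ?_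
  rintro z ⟨x, hx, y, hy, rfl⟩
  refine ⟨hI.2.2 x (hKI hx) y (hI.1 (hKI hy)), fun r hr => ?_⟩
  induction hr using Submodule.span_induction with
  | mem w hw =>
    have hwL : w ∈ H.wordSpan L q := Submodule.subset_span (H.auxIsWordMono hI.1 hw)
    have h1 : H.bracket y (H.alpha w) ∈ L := (hKq hy).2 w hwL
    have h2 : H.bracket x (H.alpha w) ∈ L := (hKq hx).2 w hwL
    rw [auxKey]
    exact Submodule.sub_mem _ (hI.2.2 x (hKI hx) _ h1) (hI.2.2 y (hKI hy) _ h2)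
  | zero => simp
  | add r₁ r₂ h₁ h₂ ih₁ ih₂ =>
    rw [map_add, map_add]
    exact I.add_mem ih₁ ih₂
  | smul c r h ih =>
    rw [map_smul, map_smul]
    exact I.smul_mem c ih

end HomLieAlgebra

/-- If `L` is a semiprime Hom-Lie algebra and `Q` is an algebra of quotients of `L`,
then `Q` is an algebra of quotients of every essential Hom-ideal `I` of `L`. -/
theorem isAlgebraOfQuotients_of_essential_ideal
    {𝔽 Q : Type*} [Field 𝔽] [AddCommGroup Q] [Module 𝔽 Q]
    (H : HomLieAlgebra 𝔽 Q) (L : Submodule 𝔽 Q) (hL : H.IsSubalgebra L)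
    (hsp : H.IsSemiprimeOn L) (hq : H.IsAlgebraOfQuotients L) :
    ∀ I : Submodule 𝔽 Q, H.IsEssentialIdealOf L I → H.IsAlgebraOfQuotients I := by
  intro I hIe p q hp
  obtain ⟨hIdl, hEss⟩ := hIe
  -- `α` has trivial kernel
  have hker : ∀ v : Q, H.alpha v = 0 → v = 0 := by
    intro v hv
    by_contra h0
    obtain ⟨x, -, hx⟩ := hq v v h0
    rw [hv, map_zero] at hx
    exact hx rfl
  have hKLidl : H.IsIdealOf L (H.quotIdeal L q) := H.auxQuotIdealIsIdeal hL q
  -- K := I ⊓ (L : q) is an essential ideal of L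
  have hKidl : H.IsIdealOf L (I ⊓ H.quotIdeal L q) := H.auxInfIdeal hIdl hKLidl
  have hKess : ∀ J, H.IsIdealOf L J → J ≠ ⊥ → (I ⊓ H.quotIdeal L q) ⊓ J ≠ ⊥ := by
    intro J hJ hJ0
    have h1 : I ⊓ J ≠ ⊥ := hEss J hJ hJ0
    have h2 : H.quotIdeal L q ⊓ (I ⊓ J) ≠ ⊥ :=
      H.auxQuotIdealEss hL hq q _ (H.auxInfIdeal hIdl hJ) h1
    obtain ⟨e, he, he0⟩ := (Submodule.ne_bot_iff _).mp h2
    rw [Submodule.mem_inf, Submodule.mem_inf] at he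
    exact (Submodule.ne_bot_iff _).mpr ⟨e, Submodule.mem_inf.mpr
      ⟨Submodule.mem_inf.mpr ⟨he.2.1, he.1⟩, he.2.2⟩, he0⟩
  -- N := span of brackets of K
  have hNidl : H.IsIdealOf L (Submodule.span 𝔽
      {z | ∃ x ∈ I ⊓ H.quotIdeal L q, ∃ y ∈ I ⊓ H.quotIdeal L q, z = H.bracket x y}) :=
    H.auxNIsIdeal hker hL hKidl
  have hNle : Submodule.span 𝔽
      {z | ∃ x ∈ I ⊓ H.quotIdeal L q, ∃ y ∈ I ⊓ H.quotIdeal L q, z = H.bracket x y}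
        ≤ H.quotIdeal I q :=
    H.auxNLeQuot hIdl q inf_le_left inf_le_right
  -- N is essential
  have hNess : ∀ J, H.IsIdealOf L J → J ≠ ⊥ → (Submodule.span 𝔽
      {z | ∃ x ∈ I ⊓ H.quotIdeal L q, ∃ y ∈ I ⊓ H.quotIdeal L q, z = H.bracket x y})
        ⊓ J ≠ ⊥ := by
    intro J hJ hJ0
    obtain ⟨u, hu, v, hv, huv⟩ := hsp _ (H.auxInfIdeal hKidl hJ) (hKess J hJ hJ0)
    have huK := (Submodule.mem_inf.mp hu).1
    have huJ := (Submodule.mem_inf.mp hu).2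
    have hvK := (Submodule.mem_inf.mp hv).1
    refine (Submodule.ne_bot_iff _).mpr ⟨H.bracket u (H.alpha v),
      Submodule.mem_inf.mpr ⟨?_, ?_⟩, huv⟩
    · exact Submodule.subset_span ⟨u, huK, H.alpha v, hKidl.2.1 v hvK, rfl⟩
    · exact hJ.2.2 u huJ (H.alpha v) (hL.1 v (hKidl.1 hvK))
  -- main contradiction
  by_contra hcon
  push_neg at hcon
  have hNp : ∀ n ∈ Submodule.span 𝔽
      {z | ∃ x ∈ I ⊓ H.quotIdeal L q, ∃ y ∈ I ⊓ H.quotIdeal L q, z = H.bracket x y},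
      H.bracket n (H.alpha p) = 0 := fun n hn => hcon n (hNle hn)
  obtain ⟨x₀, hx₀, hc0⟩ := hq p p hp
  have hcL : H.bracket x₀ (H.alpha p) ∈ L :=
    hx₀.2 p (Submodule.subset_span HomLieAlgebra.IsWord.base)
  have hcZ : ∀ n ∈ Submodule.span 𝔽
      {z | ∃ x ∈ I ⊓ H.quotIdeal L q, ∃ y ∈ I ⊓ H.quotIdeal L q, z = H.bracket x y},
      H.bracket (H.bracket x₀ (H.alpha p)) (H.alpha n) = 0 := by
    intro n hn
    have t1 : H.bracket (H.alpha p) (H.alpha n) = 0 := by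
      rw [← H.comm₁ p (H.alpha n), H.skew p (H.alpha n), HomLieAlgebra.auxSlide H n p,
        hNp n hn, neg_zero, map_zero]
    have hm : H.bracket n (H.alpha x₀) ∈ Submodule.span 𝔽
        {z | ∃ x ∈ I ⊓ H.quotIdeal L q, ∃ y ∈ I ⊓ H.quotIdeal L q, z = H.bracket x y} :=
      hNidl.2.2 n hn (H.alpha x₀) (hL.1 x₀ hx₀.1)
    have t2 : H.bracket (H.alpha p) (H.bracket x₀ (H.alpha n)) = 0 := by
      rw [← HomLieAlgebra.auxSlide H x₀ n, H.skew (H.alpha x₀) n, map_neg,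
        H.skew (H.alpha p) (H.bracket n (H.alpha x₀)), hNp _ hm, neg_zero, neg_zero]
    rw [HomLieAlgebra.auxKey, t1, t2, map_zero, sub_zero]
  have hmem : H.bracket x₀ (H.alpha p) ∈ H.auxAnn L (Submodule.span 𝔽
      {z | ∃ x ∈ I ⊓ H.quotIdeal L q, ∃ y ∈ I ⊓ H.quotIdeal L q, z = H.bracket x y}) :=
    ⟨hcL, hcZ⟩
  rw [H.auxAnnEqBot hL hsp hNidl hNess] at hmem
  exact hc0 ((Submodule.mem_bot 𝔽).mp hmem)
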